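/- For any graph H with at least one edge and any n ≥ 1, there exists a (H, H[n])-partite-extra-saturated subgraph of H[n] with at most (2n−1)·e(H) edges, namely a single partite copy of H together with all edges from its vertices to all vertices in adjacent parts. -/

import Mathlib

open SimpleGraph

/-- The blow-up `H[n]` of a graph `H` onto parts of size `n`: each vertex of `H` is
replaced by an independent set of size `n`, each edge by a complete bipartite graph. -/
def blowup {V : Type*} (H : SimpleGraph V) (n : ℕ) : SimpleGraph (V × Fin n) :=
  SimpleGraph.comap Prod.fst H

/-- `f` selects one vertex in each part of the blow-up, forming a partite copy of `H` in `G`. -/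
def IsPartiteCopy {V : Type*} {n : ℕ} (H : SimpleGraph V) (G : SimpleGraph (V × Fin n))
    (f : V → Fin n) : Prop :=
  ∀ ⦃u v : V⦄, H.Adj u v → G.Adj (u, f u) (v, f v)

/-- `G ⊆ H[n]` is `(H,H[n])`-partite-saturated: it has no partite copy of `H`, but adding
any edge of `H[n]` not in `G` creates a partite copy of `H`. -/
def PartiteSaturated {V : Type*} {n : ℕ} (H : SimpleGraph V)
    (G : SimpleGraph (V × Fin n)) : Prop :=
  G ≤ blowup H n ∧ (¬ ∃ f, IsPartiteCopy H G f) ∧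
    ∀ ⦃x y : V × Fin n⦄, (blowup H n).Adj x y → ¬ G.Adj x y →
      ∃ f, IsPartiteCopy H (G ⊔ SimpleGraph.fromEdgeSet {s(x, y)}) f

/-- The degree of a vertex. -/
noncomputable def deg {α : Type*} (G : SimpleGraph α) (v : α) : ℕ := (G.neighborSet v).ncard

/-- `G ⊆ H[n]` is `(H,H[n])`-partite-extra-saturated: adding any edge of `H[n]` not in
`G` strictly increases the number of partite copies of `H`. -/
def ExtraSaturated {V : Type*} {n : ℕ} (H : SimpleGraph V)
    (G : SimpleGraph (V × Fin n)) : Prop :=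
  G ≤ blowup H n ∧
    ∀ ⦃x y : V × Fin n⦄, (blowup H n).Adj x y → ¬ G.Adj x y →
      Nat.card {f : V → Fin n // IsPartiteCopy H G f} <
        Nat.card {f : V → Fin n //
          IsPartiteCopy H (G ⊔ SimpleGraph.fromEdgeSet {s(x, y)}) f}

/-- The subgraph of `H[n]` consisting of the partite copy of `H` at index `i` together
with all edges from its vertices to all vertices in adjacent parts. -/
def coneCopy {V : Type*} (H : SimpleGraph V) (n : ℕ) (i : Fin n) :
    SimpleGraph (V × Fin n) where
  Adj x y := H.Adj x.1 y.1 ∧ (x.2 = i ∨ y.2 = i)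
  symm := by
    constructor
    rintro x y ⟨h, hi⟩
    exact ⟨h.symm, hi.symm⟩
  loopless := by
    constructor
    rintro x ⟨h, -⟩
    exact H.irrefl h

lemma cardS {n : ℕ} (i : Fin n) :
    Fintype.card {p : Fin n × Fin n // p.1 = i ∨ p.2 = i} = 2 * n - 1 := by
  classical
  rw [Fintype.card_subtype]
  have hA : (Finset.univ.filter (fun p : Fin n × Fin n => p.1 = i)) = {i} ×ˢ Finset.univ := by
    ext p; obtain ⟨a, b⟩ := p; simp [eq_comm, Prod.ext_iff]
  have hB : (Finset.univ.filter (fun p : Fin n × Fin n => p.2 = i)) = Finset.univ ×ˢ {i} := by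
    ext p; obtain ⟨a, b⟩ := p; simp [eq_comm, Prod.ext_iff]
  have h := Finset.card_union_add_card_inter
    ({i} ×ˢ Finset.univ : Finset (Fin n × Fin n)) (Finset.univ ×ˢ {i})
  have hI : ({i} ×ˢ Finset.univ : Finset (Fin n × Fin n)) ∩ (Finset.univ ×ˢ {i}) = {(i,i)} := by
    ext p; obtain ⟨a, b⟩ := p; simp [Prod.ext_iff, eq_comm]
  rw [hI] at h
  rw [Finset.filter_or, hA, hB]
  simp [Finset.card_product] at h ⊢
  have hn : 0 < n := i.pos
  omega


/-- For any graph `H` with at least one edge and `n ≥ 1`, the graph consisting of a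
single partite copy of `H` together with all edges from its vertices to all vertices in
adjacent parts is `(H,H[n])`-partite-extra-saturated and has at most `(2n-1)·e(H)`
edges. -/
theorem stmt_18 {V : Type*} [Fintype V] (H : SimpleGraph V)
    (he : H.edgeSet.Nonempty) (n : ℕ) (hn : 1 ≤ n) (i : Fin n) :
    ExtraSaturated H (coneCopy H n i) ∧
      (coneCopy H n i).edgeSet.ncard ≤ (2 * n - 1) * H.edgeSet.ncard := by
  classical
  constructor
  · refine ⟨fun x y hxy => hxy.1, ?_⟩
    rintro ⟨u, a⟩ ⟨v, b⟩ hxy hnxy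
    have huv : H.Adj u v := hxy
    have hab : a ≠ i ∧ b ≠ i := by
      by_contra hc
      push_neg at hc
      rcases Classical.em (a = i) with h | h
      · exact hnxy ⟨huv, Or.inl h⟩
      · exact hnxy ⟨huv, Or.inr (hc h)⟩
    set G := coneCopy H n i with hG
    set G' := G ⊔ SimpleGraph.fromEdgeSet {s(((u, a) : V × Fin n), (v, b))} with hG'
    set f : V → Fin n := fun w => if w = u then a else if w = v then b else i with hf
    have hfu : f u = a := by simp [hf]
    have hfv : f v = b := by simp [hf, huv.ne']
    have hcopy : IsPartiteCopy H G' f := by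
      intro p q hpq
      by_cases hpu : p = u
      · by_cases hqv : q = v
        · subst hpu; subst hqv
          rw [hfu, hfv]
          exact Or.inr ⟨rfl, by simp [Prod.ext_iff, huv.ne]⟩
        · have hqu : q ≠ u := fun h => hpq.ne (hpu.trans h.symm)
          have : f q = i := by simp [hf, hqu, hqv]
          exact Or.inl ⟨hpq, Or.inr this⟩
      · by_cases hpv : p = v
        · by_cases hqu : q = u
          · subst hpv; subst hqu
            rw [hfu, hfv]
            refine Or.inr ⟨?_, by simp [Prod.ext_iff, huv.ne']⟩
            rw [Sym2.eq_swap]; rfl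
          · have hqv : q ≠ v := fun h => hpq.ne (hpv.trans h.symm)
            have : f q = i := by simp [hf, hqu, hqv]
            exact Or.inl ⟨hpq, Or.inr this⟩
        · have : f p = i := by simp [hf, hpu, hpv]
          exact Or.inl ⟨hpq, Or.inl this⟩
    have hnot : ¬ IsPartiteCopy H G f := by
      intro h
      have := h huv
      rw [hfu, hfv] at this
      rcases this.2 with h1 | h1
      · exact hab.1 h1
      · exact hab.2 h1
    have hsubset : {g : V → Fin n | IsPartiteCopy H G g} ⊂ {g | IsPartiteCopy H G' g} :=
      ⟨fun g hg p q hpq => Or.inl (hg hpq), fun hle => hnot (hle hcopy)⟩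
    have h1 : Nat.card {g : V → Fin n // IsPartiteCopy H G g}
        = Set.ncard {g : V → Fin n | IsPartiteCopy H G g} := by
      rw [Set.ncard_eq_toFinset_card']; rw [Set.toFinset_setOf]
      rw [Nat.card_eq_fintype_card, Fintype.card_subtype]
    have h2 : Nat.card {g : V → Fin n // IsPartiteCopy H G' g}
        = Set.ncard {g : V → Fin n | IsPartiteCopy H G' g} := by
      rw [Set.ncard_eq_toFinset_card']; rw [Set.toFinset_setOf]
      rw [Nat.card_eq_fintype_card, Fintype.card_subtype]
    rw [h1, h2]
    exact Set.ncard_lt_ncard hsubset (Set.toFinite _)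
  · -- edge counting via darts
    have hdc : Fintype.card (coneCopy H n i).Dart = 2 * (coneCopy H n i).edgeFinset.card :=
      SimpleGraph.dart_card_eq_twice_card_edges _
    have hdH : Fintype.card H.Dart = 2 * H.edgeFinset.card :=
      SimpleGraph.dart_card_eq_twice_card_edges _
    set φ : (coneCopy H n i).Dart → H.Dart × {p : Fin n × Fin n // p.1 = i ∨ p.2 = i} :=
      fun d => (⟨(d.toProd.1.1, d.toProd.2.1), d.adj.1⟩, ⟨(d.toProd.1.2, d.toProd.2.2), d.adj.2⟩)
        with hφ
    have hinj : Function.Injective φ := by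
      intro d1 d2 h
      have h1 := congrArg (fun x : H.Dart × {p : Fin n × Fin n // p.1 = i ∨ p.2 = i} => x.1.toProd.1) h
      have h2 := congrArg (fun x : H.Dart × {p : Fin n × Fin n // p.1 = i ∨ p.2 = i} => x.1.toProd.2) h
      have h3 := congrArg (fun x : H.Dart × {p : Fin n × Fin n // p.1 = i ∨ p.2 = i} => x.2.val.1) h
      have h4 := congrArg (fun x : H.Dart × {p : Fin n × Fin n // p.1 = i ∨ p.2 = i} => x.2.val.2) h
      simp only [hφ] at h1 h2 h3 h4
      apply SimpleGraph.Dart.ext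
      rw [Prod.ext_iff, Prod.ext_iff, Prod.ext_iff]
      exact ⟨⟨h1, h3⟩, h2, h4⟩
    have hle := Fintype.card_le_of_injective φ hinj
    rw [hdc, Fintype.card_prod, hdH, cardS i] at hle
    have e1 : (coneCopy H n i).edgeSet.ncard = (coneCopy H n i).edgeFinset.card := by
      rw [← SimpleGraph.coe_edgeFinset, Set.ncard_coe_finset]
    have e2 : H.edgeSet.ncard = H.edgeFinset.card := by
      rw [← SimpleGraph.coe_edgeFinset, Set.ncard_coe_finset]
    rw [e1, e2]
    have h2' : 2 * H.edgeFinset.card * (2 * n - 1) = 2 * ((2 * n - 1) * H.edgeFinset.card) := by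
      ring
    rw [h2'] at hle
    exact Nat.le_of_mul_le_mul_left hle (by norm_num)
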